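/- Let μ > ν > 0, Y₀ ≥ 0, Q_μ, Q_ν ≥ 0, and suppose Yᵢ ∈ [0,1] for all i with Q_μ·e^μ = Σᵢ μⁱ Yᵢ / i! and Q_ν·e^ν = Σᵢ νⁱ Yᵢ / i!. Then Y₁ ≥ (1/(μν(μ−ν)))·(μ²·Q_ν·e^ν − ν²·Q_μ·e^μ − (μ² − ν²)·Y₀). -/

import Mathlib

theorem decoy_Y1_lower_bound (μ ν Qμ Qν : ℝ) (Y : ℕ → ℝ)
    (hν : 0 < ν) (hμν : ν < μ)
    (hQμ : 0 ≤ Qμ) (hQν : 0 ≤ Qν)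
    (hY : ∀ i, Y i ∈ Set.Icc (0 : ℝ) 1)
    (hsμ : HasSum (fun i => μ ^ i * Y i / (Nat.factorial i : ℝ)) (Qμ * Real.exp μ))
    (hsν : HasSum (fun i => ν ^ i * Y i / (Nat.factorial i : ℝ)) (Qν * Real.exp ν)) :
    Y 1 ≥ (1 / (μ * ν * (μ - ν))) *
      (μ ^ 2 * Qν * Real.exp ν - ν ^ 2 * Qμ * Real.exp μ - (μ ^ 2 - ν ^ 2) * Y 0) := by
  have hμ : 0 < μ := hν.trans hμν
  set f : ℕ → ℝ := fun i => (μ ^ 2 * ν ^ i - ν ^ 2 * μ ^ i) * Y i / (Nat.factorial i : ℝ)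
    with hf
  have hT : HasSum f (μ ^ 2 * (Qν * Real.exp ν) - ν ^ 2 * (Qμ * Real.exp μ)) := by
    have h := (hsν.mul_left (μ ^ 2)).sub (hsμ.mul_left (ν ^ 2))
    convert h using 2 with i
    · rfl
    simp only [hf]
    ring
  have key : HasSum (fun n => f (n + 2))
      ((μ ^ 2 * (Qν * Real.exp ν) - ν ^ 2 * (Qμ * Real.exp μ)) - ∑ i ∈ Finset.range 2, f i) :=
    (hasSum_nat_add_iff 2).mpr (by simpa using hT)
  have hle : (μ ^ 2 * (Qν * Real.exp ν) - ν ^ 2 * (Qμ * Real.exp μ))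
      - ∑ i ∈ Finset.range 2, f i ≤ 0 := by
    refine hasSum_le (fun n => ?_) key hasSum_zero
    have h1 : μ ^ 2 * ν ^ (n + 2) - ν ^ 2 * μ ^ (n + 2) ≤ 0 := by
      have hp := pow_le_pow_left₀ hν.le hμν.le n
      calc μ ^ 2 * ν ^ (n + 2) - ν ^ 2 * μ ^ (n + 2) = μ ^ 2 * ν ^ 2 * (ν ^ n - μ ^ n) := by ring
        _ ≤ 0 := mul_nonpos_of_nonneg_of_nonpos (by positivity) (by linarith)
    have h2 : (0 : ℝ) ≤ Y (n + 2) := (hY (n + 2)).1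
    have h3 : (0 : ℝ) < (Nat.factorial (n + 2) : ℝ) := by
      exact_mod_cast Nat.factorial_pos _
    exact div_nonpos_of_nonpos_of_nonneg (mul_nonpos_of_nonpos_of_nonneg h1 h2) h3.le
  have hsum : ∑ i ∈ Finset.range 2, f i
      = (μ ^ 2 - ν ^ 2) * Y 0 + (μ ^ 2 * ν - ν ^ 2 * μ) * Y 1 := by
    simp [hf, Finset.sum_range_succ]
  have hc : 0 < μ * ν * (μ - ν) := mul_pos (mul_pos hμ hν) (sub_pos.mpr hμν)
  rw [ge_iff_le, one_div, inv_mul_le_iff₀ hc]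
  nlinarith [hle, hsum]
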